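/- Let α ≥ 0, let ν ∈ ℝⁿ be a unit vector, x₀ ∈ ℝⁿ, and let v be twice continuously differentiable on an open neighborhood U of x₀ with v(x₀) = 0 and ∇v(x₀) = −ν. Suppose there is t₀ > 0 such that for every t ∈ (0, t₀): x₀ − tν ∈ U, v(x₀ − tν) > 0, ∇v(x₀ − tν) ≠ 0, and Δv(x₀ − tν) = (α/2) (1 − |∇v(x₀ − tν)|²) / v(x₀ − tν). Then lim_{t → 0⁺} div( ∇v/|∇v| )(x₀ − tν) = −(1 + α) ⟨ν, D²v(x₀) ν⟩. -/

import Mathlib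

open Topology

/-- The Laplacian of a function on `ℝⁿ`, as the sum of its pure second
partial derivatives. -/
noncomputable def lap {n : ℕ} (f : EuclideanSpace ℝ (Fin n) → ℝ)
    (x : EuclideanSpace ℝ (Fin n)) : ℝ :=
  ∑ i : Fin n, fderiv ℝ (fun y => fderiv ℝ f y (EuclideanSpace.single i 1)) x
    (EuclideanSpace.single i 1)

/-- The divergence `div F = ∑ᵢ ∂_i F^i` of a vector field on `ℝⁿ`. -/
noncomputable def vdiv {n : ℕ} (F : EuclideanSpace ℝ (Fin n) → EuclideanSpace ℝ (Fin n))
    (x : EuclideanSpace ℝ (Fin n)) : ℝ :=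
  ∑ i : Fin n, fderiv ℝ (fun y => F y i) x (EuclideanSpace.single i 1)

section MeanCurvatureAux

open RealInnerProductSpace

variable {n : ℕ}


local notation "E" => EuclideanSpace ℝ (Fin n)

theorem inner_grad (f : E → ℝ) (x w : E) :
    ⟪gradient f x, w⟫ = fderiv ℝ f x w := by
  rw [gradient]
  exact InnerProductSpace.toDual_symm_apply

theorem sum_single_smul (x : E) :
    ∑ i : Fin n, x i • EuclideanSpace.single i (1 : ℝ) = x := by
  ext j
  have h : (∑ i : Fin n, x i • EuclideanSpace.single i (1 : ℝ)) j
      = ∑ i : Fin n, (x i • EuclideanSpace.single i (1 : ℝ) : E) j :=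
    map_sum (EuclideanSpace.proj (𝕜 := ℝ) j)
      (fun i : Fin n => x i • EuclideanSpace.single i (1 : ℝ)) Finset.univ
  rw [h]
  simp [EuclideanSpace.single_apply]

theorem grad_apply (f : E → ℝ) (x : E) (i : Fin n) :
    gradient f x i = fderiv ℝ f x (EuclideanSpace.single i 1) := by
  rw [← inner_grad]
  rw [EuclideanSpace.inner_single_right]
  simp

theorem gradient_contDiffOn {U : Set E} (hU : IsOpen U) {v : E → ℝ}
    (hv : ContDiffOn ℝ 2 v U) : ContDiffOn ℝ 1 (gradient v) U := by
  have h1 : ContDiffOn ℝ 1 (fderiv ℝ v) U := hv.fderiv_of_isOpen hU (by norm_num)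
  have h2 : ContDiffOn ℝ 1
      (fun x => ∑ i : Fin n, (fderiv ℝ v x (EuclideanSpace.single i 1)) •
        (EuclideanSpace.single i (1:ℝ) : E)) U := by
    apply ContDiffOn.sum
    intro i _
    exact (h1.continuousLinearMap_comp
      (ContinuousLinearMap.apply ℝ ℝ (EuclideanSpace.single i (1:ℝ)))).smul contDiffOn_const
  apply h2.congr
  intro x _
  conv_lhs => rw [← sum_single_smul (gradient v x)]
  exact Finset.sum_congr rfl fun i _ => by rw [grad_apply]

theorem vdiv_formula {U : Set E} (hU : IsOpen U) {v : E → ℝ} (hv : ContDiffOn ℝ 2 v U)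
    {p : E} (hp : p ∈ U) (hGp : gradient v p ≠ 0) :
    vdiv (fun y => ‖gradient v y‖⁻¹ • gradient v y) p =
      ‖gradient v p‖⁻¹ * lap v p -
      (‖gradient v p‖ ^ 3)⁻¹ *
        ⟪gradient v p, fderiv ℝ (gradient v) p (gradient v p)⟫ := by
  set G := gradient v with hGdef
  have hG1 : ContDiffOn ℝ 1 G U := gradient_contDiffOn hU hv
  have hGd : DifferentiableAt ℝ G p :=
    (hG1.differentiableOn one_ne_zero).differentiableAt (hU.mem_nhds hp)
  set D := fderiv ℝ G p with hDdef
  have hD : HasFDerivAt G D p := hGd.hasFDerivAt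
  have hNp : ‖G p‖ ≠ 0 := norm_ne_zero_iff.mpr hGp
  have hNd : DifferentiableAt ℝ (fun y => ‖G y‖) p := hGd.norm ℝ hGp
  set L := fderiv ℝ (fun y => ‖G y‖) p with hLdef
  have hN : HasFDerivAt (fun y => ‖G y‖) L p := hNd.hasFDerivAt
  have hLw : ∀ w, L w = ⟪G p, D w⟫ / ‖G p‖ := by
    intro w
    have h1 : HasFDerivAt (fun y => ‖G y‖ * ‖G y‖) (‖G p‖ • L + ‖G p‖ • L) p := hN.mul hN
    have h2 : HasFDerivAt (fun y => ⟪G y, G y⟫)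
        ((fderivInnerCLM ℝ (G p, G p)).comp (D.prod D)) p := hD.inner ℝ hD
    have h3 : (fun y : E => ⟪G y, G y⟫) = fun y => ‖G y‖ * ‖G y‖ := by
      funext y; exact real_inner_self_eq_norm_mul_norm _
    rw [h3] at h2
    have h4 := h1.unique h2
    have h5 : (‖G p‖ • L + ‖G p‖ • L) w
        = ((fderivInnerCLM ℝ (G p, G p)).comp (D.prod D)) w := by rw [h4]
    simp only [ContinuousLinearMap.add_apply, ContinuousLinearMap.smul_apply,
      ContinuousLinearMap.comp_apply, ContinuousLinearMap.prod_apply,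
      fderivInnerCLM_apply, smul_eq_mul] at h5
    have h6 : ⟪D w, G p⟫ = ⟪G p, D w⟫ := real_inner_comm _ _
    rw [h6] at h5
    have h7 : ‖G p‖ * L w = ⟪G p, D w⟫ := by linarith
    rw [eq_div_iff hNp, mul_comm] at *
    linarith
  -- derivative of each component of the unit gradient field
  have hinv : HasFDerivAt (fun y => (‖G y‖)⁻¹) ((-(‖G p‖ ^ 2)⁻¹) • L) p :=
    (hasDerivAt_inv hNp).comp_hasFDerivAt p hN
  have hCi : ∀ i : Fin n, HasFDerivAt (fun y => ⟪G y, EuclideanSpace.single i (1:ℝ)⟫)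
      ((fderivInnerCLM ℝ (G p, EuclideanSpace.single i (1:ℝ))).comp
        (D.prod (0 : E →L[ℝ] E))) p :=
    fun i => hD.inner ℝ (hasFDerivAt_const _ _)
  have hFi : ∀ i : Fin n,
      fderiv ℝ (fun y => (fun y => ‖G y‖⁻¹ • G y) y i) p (EuclideanSpace.single i 1)
      = (‖G p‖)⁻¹ * ⟪D (EuclideanSpace.single i (1:ℝ)), EuclideanSpace.single i (1:ℝ)⟫
        + ⟪G p, EuclideanSpace.single i (1:ℝ)⟫ * (-(‖G p‖ ^ 2)⁻¹ * L (EuclideanSpace.single i 1)) := by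
    intro i
    have hfun : (fun y => (fun y => ‖G y‖⁻¹ • G y) y i)
        = fun y => (‖G y‖)⁻¹ * ⟪G y, EuclideanSpace.single i (1:ℝ)⟫ := by
      funext y
      have : ⟪G y, EuclideanSpace.single i (1:ℝ)⟫ = G y i := by
        simp [EuclideanSpace.inner_single_right]
      rw [this]
      rfl
    have hmul : HasFDerivAt (fun y => ‖G y‖⁻¹ * ⟪G y, EuclideanSpace.single i (1:ℝ)⟫) _ p :=
      hinv.mul (hCi i)
    rw [hfun, hmul.fderiv]
    simp only [ContinuousLinearMap.add_apply, ContinuousLinearMap.smul_apply,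
      ContinuousLinearMap.comp_apply, ContinuousLinearMap.prod_apply,
      fderivInnerCLM_apply, smul_eq_mul, ContinuousLinearMap.zero_apply,
      inner_zero_right, add_zero, zero_add]
  -- the Laplacian as a sum of second derivatives
  have hlap : lap v p = ∑ i : Fin n,
      ⟪D (EuclideanSpace.single i (1:ℝ)), EuclideanSpace.single i (1:ℝ)⟫ := by
    unfold lap
    apply Finset.sum_congr rfl
    intro i _
    have hfun : (fun y => fderiv ℝ v y (EuclideanSpace.single i (1:ℝ)))
        = fun y => ⟪G y, EuclideanSpace.single i (1:ℝ)⟫ := by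
      funext y; rw [hGdef, inner_grad]
    rw [hfun, (hCi i).fderiv]
    simp [fderivInnerCLM_apply]
  -- the quadratic-form sum
  have hquad : ∑ i : Fin n, ⟪G p, EuclideanSpace.single i (1:ℝ)⟫
      * ⟪G p, D (EuclideanSpace.single i (1:ℝ))⟫ = ⟪G p, D (G p)⟫ := by
    have h1 : ∀ i : Fin n, ⟪G p, EuclideanSpace.single i (1:ℝ)⟫
        * ⟪G p, D (EuclideanSpace.single i (1:ℝ))⟫
        = ⟪G p, D ((G p i) • EuclideanSpace.single i (1:ℝ))⟫ := by
      intro i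
      rw [map_smul, real_inner_smul_right]
      congr 1
      simp [EuclideanSpace.inner_single_right]
    rw [Finset.sum_congr rfl fun i _ => h1 i, ← inner_sum, ← map_sum,
      sum_single_smul]
  -- put it together
  unfold vdiv
  rw [Finset.sum_congr rfl fun i _ => hFi i, Finset.sum_add_distrib]
  have e1 : ∑ i : Fin n, (‖G p‖)⁻¹
      * ⟪D (EuclideanSpace.single i (1:ℝ)), EuclideanSpace.single i (1:ℝ)⟫
      = (‖G p‖)⁻¹ * lap v p := by rw [hlap, Finset.mul_sum]
  have hcoef : -(‖G p‖ ^ 2)⁻¹ / ‖G p‖ = -(‖G p‖ ^ 3)⁻¹ := by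
    field_simp
  have e2 : ∑ i : Fin n, ⟪G p, EuclideanSpace.single i (1:ℝ)⟫
      * (-(‖G p‖ ^ 2)⁻¹ * L (EuclideanSpace.single i 1))
      = -(‖G p‖ ^ 3)⁻¹ * ⟪G p, D (G p)⟫ := by
    have h3 : ∀ i : Fin n, ⟪G p, EuclideanSpace.single i (1:ℝ)⟫
        * (-(‖G p‖ ^ 2)⁻¹ * L (EuclideanSpace.single i 1))
        = (-(‖G p‖ ^ 2)⁻¹ / ‖G p‖) * (⟪G p, EuclideanSpace.single i (1:ℝ)⟫
          * ⟪G p, D (EuclideanSpace.single i (1:ℝ))⟫) := by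
      intro i
      rw [hLw]
      ring
    rw [Finset.sum_congr rfl fun i _ => h3 i, ← Finset.mul_sum, hquad, hcoef]
  rw [e1, e2]
  ring

theorem mean_curvature_limit_at_free_boundary' {n : ℕ} (α : ℝ) (hα : 0 ≤ α)
    (ν x₀ : EuclideanSpace ℝ (Fin n)) (hν : ‖ν‖ = 1)
    (U : Set (EuclideanSpace ℝ (Fin n))) (hU : IsOpen U) (hx₀ : x₀ ∈ U)
    (v : EuclideanSpace ℝ (Fin n) → ℝ) (hv : ContDiffOn ℝ 2 v U)
    (hv0 : v x₀ = 0) (hgrad : gradient v x₀ = -ν)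
    (t₀ : ℝ) (ht₀ : 0 < t₀)
    (h : ∀ t ∈ Set.Ioo (0 : ℝ) t₀,
      x₀ - t • ν ∈ U ∧ 0 < v (x₀ - t • ν) ∧ gradient v (x₀ - t • ν) ≠ 0 ∧
      lap v (x₀ - t • ν) =
        (α / 2) * ((1 - ‖gradient v (x₀ - t • ν)‖ ^ 2) / v (x₀ - t • ν))) :
    Filter.Tendsto
      (fun t : ℝ => vdiv (fun y => ‖gradient v y‖⁻¹ • gradient v y) (x₀ - t • ν))
      (𝓝[>] (0 : ℝ))
      (𝓝 (-(1 + α) * fderiv ℝ (fun y => fderiv ℝ v y ν) x₀ ν)) := by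
  set G := gradient v with hGdef
  set p : ℝ → EuclideanSpace ℝ (Fin n) := fun t => x₀ - t • ν with hpdef
  set D₀ := fderiv ℝ G x₀ with hD₀def
  have hG1 : ContDiffOn ℝ 1 G U := gradient_contDiffOn hU hv
  have hGd : DifferentiableAt ℝ G x₀ :=
    (hG1.differentiableOn one_ne_zero).differentiableAt (hU.mem_nhds hx₀)
  have hD₀ : HasFDerivAt G D₀ x₀ := hGd.hasFDerivAt
  set q : ℝ := ⟪D₀ ν, ν⟫ with hqdef
  have hq : fderiv ℝ (fun y => fderiv ℝ v y ν) x₀ ν = q := by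
    have hfun : (fun y => fderiv ℝ v y ν) = fun y => ⟪G y, ν⟫ := by
      funext y; rw [hGdef, inner_grad]
    rw [hfun, (hD₀.inner ℝ (hasFDerivAt_const ν x₀)).fderiv]
    simp [fderivInnerCLM_apply, hqdef]
  have hIoo : Set.Ioo (0:ℝ) t₀ ∈ 𝓝[>] (0:ℝ) :=
    Ioo_mem_nhdsGT_of_mem ⟨le_refl 0, ht₀⟩
  have hp0 : Filter.Tendsto p (𝓝[>] (0:ℝ)) (𝓝 x₀) := by
    have hc : Continuous p := by
      rw [hpdef]; exact continuous_const.sub (continuous_id.smul continuous_const)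
    have h0 : p 0 = x₀ := by simp [hpdef]
    simpa [h0] using ((hc.tendsto 0).mono_left nhdsWithin_le_nhds)
  have hGt : Filter.Tendsto (fun t => G (p t)) (𝓝[>] (0:ℝ)) (𝓝 (-ν)) := by
    have h1 := (hG1.continuousOn.continuousAt (hU.mem_nhds hx₀)).tendsto.comp hp0
    rw [hgrad] at h1
    simpa [Function.comp_def] using h1
  have hDt : Filter.Tendsto (fun t => fderiv ℝ G (p t)) (𝓝[>] (0:ℝ)) (𝓝 D₀) := by
    have h1 := ((hG1.continuousOn_fderiv_of_isOpen hU le_rfl).continuousAt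
      (hU.mem_nhds hx₀)).tendsto.comp hp0
    simpa [Function.comp_def] using h1
  have hNt : Filter.Tendsto (fun t => ‖G (p t)‖) (𝓝[>] (0:ℝ)) (𝓝 1) := by
    have := hGt.norm
    simpa [hν] using this
  have happ : Filter.Tendsto (fun t => fderiv ℝ G (p t) (G (p t))) (𝓝[>] (0:ℝ))
      (𝓝 (D₀ (-ν))) := by
    have h1 := (isBoundedBilinearMap_apply.continuous.tendsto (D₀, -ν)).comp
      (hDt.prodMk_nhds hGt)
    simpa [Function.comp_def] using h1
  have hCt : Filter.Tendsto (fun t => ⟪G (p t), fderiv ℝ G (p t) (G (p t))⟫)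
      (𝓝[>] (0:ℝ)) (𝓝 ⟪(-ν : EuclideanSpace ℝ (Fin n)), D₀ (-ν)⟫) :=
    hGt.inner happ
  have hnn : ⟪(-ν : EuclideanSpace ℝ (Fin n)), D₀ (-ν)⟫ = q := by
    rw [map_neg, inner_neg_neg, hqdef]
    exact real_inner_comm _ _
  -- derivatives along the segment
  have hpd : HasDerivAt p (-ν) 0 := by
    have h1 : HasDerivAt (fun t : ℝ => t • ν) ((1:ℝ) • ν) 0 :=
      (hasDerivAt_id (0:ℝ)).smul_const ν
    simpa [hpdef] using h1.const_sub x₀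
  have hvd : DifferentiableAt ℝ v x₀ :=
    (hv.differentiableOn two_ne_zero).differentiableAt (hU.mem_nhds hx₀)
  have hp00 : p 0 = x₀ := by simp [hpdef]
  have hψ : HasDerivAt (fun t => v (p t)) 1 0 := by
    have hvF : HasFDerivAt v (fderiv ℝ v x₀) (p 0) := by
      rw [hp00]; exact hvd.hasFDerivAt
    have h2 := hvF.comp_hasDerivAt 0 hpd
    have h3 : fderiv ℝ v x₀ (-ν) = 1 := by
      rw [← inner_grad, ← hGdef, hgrad, inner_neg_neg, real_inner_self_eq_norm_sq, hν]
      norm_num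
    rw [h3] at h2
    exact h2
  have hGpd : HasDerivAt (fun t => G (p t)) (D₀ (-ν)) 0 := by
    have hGF : HasFDerivAt G D₀ (p 0) := by rw [hp00]; exact hD₀
    have := hGF.comp_hasDerivAt 0 hpd
    simpa [Function.comp_def] using this
  have hGp00 : G (p 0) = -ν := by rw [hp00, hgrad]
  have hφ : HasDerivAt (fun t => 1 - ⟪G (p t), G (p t)⟫) (-(2*q)) 0 := by
    have h4 := hGpd.inner ℝ hGpd
    rw [hGp00] at h4
    have h5 := h4.const_sub 1
    have h6 : -(⟪(-ν : EuclideanSpace ℝ (Fin n)), D₀ (-ν)⟫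
        + ⟪D₀ (-ν), (-ν : EuclideanSpace ℝ (Fin n))⟫) = -(2*q) := by
      rw [hnn, real_inner_comm, hnn]
      ring
    rwa [h6] at h5
  -- slope limits
  have hmono : 𝓝[>] (0:ℝ) ≤ 𝓝[≠] (0:ℝ) :=
    nhdsWithin_mono 0 (fun x hx => ne_of_gt hx)
  have hsφ : Filter.Tendsto (fun t => (1 - ⟪G (p t), G (p t)⟫)/t) (𝓝[>] (0:ℝ))
      (𝓝 (-(2*q))) := by
    have h7 := (hasDerivAt_iff_tendsto_slope.mp hφ).mono_left hmono
    have hf0 : 1 - ⟪G (p 0), G (p 0)⟫ = 0 := by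
      rw [hGp00, inner_neg_neg, real_inner_self_eq_norm_sq, hν]; norm_num
    have h8 : (slope (fun t => 1 - ⟪G (p t), G (p t)⟫) 0)
        = fun t => (1 - ⟪G (p t), G (p t)⟫)/t := by
      funext t
      rw [slope_def_field, hf0]
      simp
    rwa [h8] at h7
  have hsψ : Filter.Tendsto (fun t => v (p t)/t) (𝓝[>] (0:ℝ)) (𝓝 1) := by
    have h7 := (hasDerivAt_iff_tendsto_slope.mp hψ).mono_left hmono
    have h8 : (slope (fun t => v (p t)) 0) = fun t => v (p t)/t := by
      funext t
      rw [slope_def_field, hp00, hv0]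
      simp
    rwa [h8] at h7
  have hsdiv : Filter.Tendsto (fun t => (1 - ⟪G (p t), G (p t)⟫) / v (p t))
      (𝓝[>] (0:ℝ)) (𝓝 (-(2*q))) := by
    have h7 := hsφ.div hsψ one_ne_zero
    have heq : (fun t => ((1 - ⟪G (p t), G (p t)⟫)/t) / (v (p t)/t))
        =ᶠ[𝓝[>] (0:ℝ)] fun t => (1 - ⟪G (p t), G (p t)⟫) / v (p t) := by
      filter_upwards [self_mem_nhdsWithin] with t ht
      have ht' : (t:ℝ) ≠ 0 := ne_of_gt ht
      rcases eq_or_ne (v (p t)) 0 with hz | hz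
      · simp [hz]
      · field_simp
    simpa using h7.congr' heq
  have hA : Filter.Tendsto (fun t => lap v (p t)) (𝓝[>] (0:ℝ)) (𝓝 (-(α*q))) := by
    have h8 := hsdiv.const_mul (α/2)
    have heq : (fun t => (α/2) * ((1 - ⟪G (p t), G (p t)⟫) / v (p t)))
        =ᶠ[𝓝[>] (0:ℝ)] fun t => lap v (p t) := by
      filter_upwards [hIoo] with t ht
      have := (h t ht).2.2.2
      rw [this, real_inner_self_eq_norm_sq]
    have h9 := h8.congr' heq
    have : (α/2) * (-(2*q)) = -(α*q) := by ring
    rwa [this] at h9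
  -- assemble
  have hmain : Filter.Tendsto (fun t => ‖G (p t)‖⁻¹ * lap v (p t)
      - (‖G (p t)‖ ^ 3)⁻¹ * ⟪G (p t), fderiv ℝ G (p t) (G (p t))⟫)
      (𝓝[>] (0:ℝ)) (𝓝 (-(1+α) * q)) := by
    have h9 := ((hNt.inv₀ one_ne_zero).mul hA).sub
      (((hNt.pow 3).inv₀ (by norm_num)).mul hCt)
    have hval : (1:ℝ)⁻¹ * (-(α*q)) - ((1:ℝ)^3)⁻¹
        * ⟪(-ν : EuclideanSpace ℝ (Fin n)), D₀ (-ν)⟫ = -(1+α) * q := by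
      rw [hnn]; ring
    rwa [hval] at h9
  rw [hq]
  apply hmain.congr'
  filter_upwards [hIoo] with t ht
  obtain ⟨hU', _, hg', _⟩ := h t ht
  exact (vdiv_formula hU hv hU' hg').symm


end MeanCurvatureAux

/-- If `v` is `C²` near a free boundary point `x₀` with `v(x₀) = 0`, `∇v(x₀) = −ν`,
`|ν| = 1`, and `v` solves `Δv = (α/2)(1 − |∇v|²)/v` (with `∇v ≠ 0`) on the inward
normal segment `{x₀ − tν : 0 < t < t₀}` where `v > 0`, then the mean curvature
`div(∇v/|∇v|)(x₀ − tν)` tends to `−(1+α) v_{νν}(x₀)` as `t → 0⁺`. -/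
theorem mean_curvature_limit_at_free_boundary {n : ℕ} (α : ℝ) (hα : 0 ≤ α)
    (ν x₀ : EuclideanSpace ℝ (Fin n)) (hν : ‖ν‖ = 1)
    (U : Set (EuclideanSpace ℝ (Fin n))) (hU : IsOpen U) (hx₀ : x₀ ∈ U)
    (v : EuclideanSpace ℝ (Fin n) → ℝ) (hv : ContDiffOn ℝ 2 v U)
    (hv0 : v x₀ = 0) (hgrad : gradient v x₀ = -ν)
    (t₀ : ℝ) (ht₀ : 0 < t₀)
    (h : ∀ t ∈ Set.Ioo (0 : ℝ) t₀,
      x₀ - t • ν ∈ U ∧ 0 < v (x₀ - t • ν) ∧ gradient v (x₀ - t • ν) ≠ 0 ∧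
      lap v (x₀ - t • ν) =
        (α / 2) * ((1 - ‖gradient v (x₀ - t • ν)‖ ^ 2) / v (x₀ - t • ν))) :
    Filter.Tendsto
      (fun t : ℝ => vdiv (fun y => ‖gradient v y‖⁻¹ • gradient v y) (x₀ - t • ν))
      (𝓝[>] (0 : ℝ))
      (𝓝 (-(1 + α) * fderiv ℝ (fun y => fderiv ℝ v y ν) x₀ ν)) :=
  mean_curvature_limit_at_free_boundary' α hα ν x₀ hν U hU hx₀ v hv hv0 hgrad t₀ ht₀ h
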